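/- The classical energy function h satisfies the 0-arrow rule: if ẽ₀(b₁ ⊗ b₂) ≠ 0 then h(ẽ₀(b₁ ⊗ b₂)) = h(b₁ ⊗ b₂) + 1 when φ₀(b₁) ≥ ε₀(b₂), and h(ẽ₀(b₁ ⊗ b₂)) = h(b₁ ⊗ b₂) - 1 when φ₀(b₁) < ε₀(b₂). -/

import Mathlib

def inBad (l : ℤ) (b : ℤ × ℤ) : Prop := 0 ≤ b.1 ∧ 0 ≤ b.2 ∧ b.1 + b.2 ≤ l

def e0 (l : ℤ) (b : ℤ × ℤ) : Option (ℤ × ℤ) :=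
  if b.2 < b.1 then some (b.1 - 1, b.2)
  else if b.1 ≤ b.2 ∧ b.1 + (b.2 + 1) ≤ l then some (b.1, b.2 + 1)
  else none

def eps0 (l : ℤ) (b : ℤ × ℤ) : ℤ := l - 2 * b.2 + |b.1 - b.2|
def phi0 (l : ℤ) (b : ℤ × ℤ) : ℤ := l - 2 * b.1 + |b.1 - b.2|

/-- `ẽ₀` on a tensor product, via the tensor product rule -/
def e0Tensor (l : ℤ) (b₁ b₂ : ℤ × ℤ) : Option ((ℤ × ℤ) × (ℤ × ℤ)) :=
  if phi0 l b₁ ≥ eps0 l b₂ then (e0 l b₁).map (fun b => (b, b₂))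
  else (e0 l b₂).map (fun b => (b₁, b))

def hEnergy (b₁ b₂ : ℤ × ℤ) : ℤ :=
  max (max ((b₁.1 + b₁.2) - (b₂.1 + b₂.2)) ((b₂.1 + b₂.2) - (b₁.1 + b₁.2)))
      (max ((b₂.1 + b₂.2) + (b₁.2 - 3 * b₁.1)) ((b₁.1 + b₁.2) + (b₂.1 - 3 * b₂.2)))

set_option maxHeartbeats 1600000 in
/-- the `0`-arrow rule for the classical energy function. -/
theorem energy_e0_rule (l : ℤ) (hl : 0 < l) (b₁ b₂ : ℤ × ℤ)
    (h₁ : inBad l b₁) (h₂ : inBad l b₂) (p : (ℤ × ℤ) × (ℤ × ℤ))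
    (h : e0Tensor l b₁ b₂ = some p) :
    (phi0 l b₁ ≥ eps0 l b₂ → hEnergy p.1 p.2 = hEnergy b₁ b₂ + 1) ∧
    (phi0 l b₁ < eps0 l b₂ → hEnergy p.1 p.2 = hEnergy b₁ b₂ - 1) := by

  obtain ⟨hx1, hy1, hs1⟩ := h₁
  obtain ⟨hx2, hy2, hs2⟩ := h₂
  unfold e0Tensor e0 at h
  unfold eps0 phi0 at *
  obtain ⟨a1, b1⟩ := b₁
  obtain ⟨a2, b2⟩ := b₂
  simp only at *
  rcases abs_cases (a1 - b1) with ⟨ha1, ha1'⟩ | ⟨ha1, ha1'⟩ <;>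
  rcases abs_cases (a2 - b2) with ⟨ha2, ha2'⟩ | ⟨ha2, ha2'⟩ <;>
  split_ifs at h <;>
  simp only [Option.map_some, Option.some_inj, Option.map_none] at h <;>
  first
  | exact absurd h.symm (Option.some_ne_none p)
  | (subst h; constructor <;> intro hle <;> simp only [hEnergy] <;> omega)
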